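/- For any integers 0 ≤ k2 < k1 ≤ n and any prime power q, if t = k1 − k2, then there exist nested linear codes C2 ⊆ C1 ⊆ F_q^n with dim C1 = k1, dim C2 = k2, and M_t(C1, C2) = n + t − k1. -/
import Mathlib


/-- `V_I = {x ∈ F^n : i ∉ I → x i = 0}` -/
noncomputable def VI (F : Type) [Field F] (n : ℕ) (I : Finset (Fin n)) :
    Submodule F (Fin n → F) :=
  Submodule.pi (↑I)ᶜ (fun _ => (⊥ : Submodule F F))

/-- the `t`-th relative generalized Hamming weight of `C₂ ⊆ C₁ ⊆ F^n` -/
noncomputable def RGHW (F : Type) [Field F] {n : ℕ} (t : ℕ)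
    (C₁ C₂ : Submodule F (Fin n → F)) : ℕ :=
  sInf {d : ℕ | ∃ I : Finset (Fin n), I.card = d ∧
    Module.finrank F ↥(C₁ ⊓ VI F n I) ≥ Module.finrank F ↥(C₂ ⊓ VI F n I) + t}

/-- `π(q) = ∏_{i=1}^∞ (1 - q^{-i})` -/
noncomputable def piq (q : ℝ) : ℝ := ∏' i : ℕ, (1 - (q ^ (i + 1))⁻¹)

/-- `N₁(w,u) = ∏_{i=0}^{u-1}(q^w - q^i) / ∏_{i=0}^{u-1}(q^u - q^i)` -/
noncomputable def N1 (q : ℝ) (w u : ℕ) : ℝ :=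
  (∏ i ∈ Finset.range u, (q ^ w - q ^ i)) / (∏ i ∈ Finset.range u, (q ^ u - q ^ i))

/-- `N₂(w,u,v) = ∏_{i=0}^{v-1}(q^w - q^{u+i}) / ∏_{i=0}^{v-1}(q^v - q^i)` -/
noncomputable def N2 (q : ℝ) (w u v : ℕ) : ℝ :=
  (∏ i ∈ Finset.range v, (q ^ w - q ^ (u + i))) / (∏ i ∈ Finset.range v, (q ^ v - q ^ i))

/-- `N₃(w,u,v,a) = N₁(u,a) · N₂(w-a, u-a, v-a)` -/
noncomputable def N3 (q : ℝ) (w u v a : ℕ) : ℝ :=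
  N1 q u a * N2 q (w - a) (u - a) (v - a)

lemma mem_VI {F : Type} [Field F] {n : ℕ} {I : Finset (Fin n)} {x : Fin n → F} :
    x ∈ VI F n I ↔ ∀ i, i ∉ I → x i = 0 := by
  simp [VI, Submodule.mem_pi]

lemma card_filter_fin (n a b : ℕ) (hb : b ≤ n) :
    ((Finset.univ : Finset (Fin n)).filter (fun i : Fin n => a ≤ (i : ℕ) ∧ (i : ℕ) < b)).card
      = b - a := by
  rw [← Finset.card_image_of_injective _ Fin.val_injective]
  have h : Finset.image Fin.val ((Finset.univ : Finset (Fin n)).filter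
      (fun i : Fin n => a ≤ (i : ℕ) ∧ (i : ℕ) < b)) = Finset.Ico a b := by
    ext x
    simp only [Finset.mem_image, Finset.mem_filter, Finset.mem_univ, true_and, Finset.mem_Ico]
    constructor
    · rintro ⟨i, hi, rfl⟩; exact hi
    · rintro ⟨h1, h2⟩; exact ⟨⟨x, by omega⟩, ⟨h1, h2⟩, rfl⟩
  rw [h, Nat.card_Ico]

lemma inj_le' {F : Type} [Field F] {n : ℕ} (P : Submodule F (Fin n → F)) (S : Finset (Fin n))
    (h : ∀ x ∈ P, (∀ i ∈ S, x i = 0) → x = 0) :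
    Module.finrank F ↥P ≤ S.card := by
  let f : ↥P →ₗ[F] ({i // i ∈ S} → F) :=
    (LinearMap.funLeft F F (Subtype.val : {i // i ∈ S} → Fin n)).comp P.subtype
  have hinj : Function.Injective f := by
    rw [injective_iff_map_eq_zero]
    intro x hx
    apply Subtype.ext
    exact h x.1 x.2 (fun i hi => congrFun hx ⟨i, hi⟩)
  have := LinearMap.finrank_le_finrank_of_injective hinj
  simpa [Module.finrank_fintype_fun_eq_card] using this

lemma sec_le' {F : Type} [Field F] {n : ℕ} (P : Submodule F (Fin n → F)) (S : Finset (Fin n))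
    (g : ({i // i ∈ S} → F) → (Fin n → F)) (hg : IsLinearMap F g)
    (hmem : ∀ y, g y ∈ P) (hsec : ∀ y (i : {i // i ∈ S}), g y ↑i = y i) :
    S.card ≤ Module.finrank F ↥P := by
  let G : ({i // i ∈ S} → F) →ₗ[F] ↥P :=
    { toFun := fun y => ⟨g y, hmem y⟩
      map_add' := fun y z => Subtype.ext (hg.map_add y z)
      map_smul' := fun c y => Subtype.ext (hg.map_smul c y) }
  have hinj : Function.Injective G := by
    rw [injective_iff_map_eq_zero]
    intro y hy
    funext i
    have h2 : g y ↑i = 0 := by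
      have := congrArg (fun v : ↥P => (v : Fin n → F) ↑i) hy
      simpa [G] using this
    rw [hsec] at h2
    simpa using h2
  have := LinearMap.finrank_le_finrank_of_injective hinj
  simpa [Module.finrank_fintype_fun_eq_card] using this

/-- Lemma 3: for `t = k₁ - k₂` there are nested codes attaining the Singleton
bound for RGHW. -/
theorem exists_codes_singleton_attaining (F : Type) [Field F] [Fintype F]
    (n k1 k2 t : ℕ) (hk21 : k2 < k1) (hk1n : k1 ≤ n) (ht : t = k1 - k2) :
    ∃ C₁ C₂ : Submodule F (Fin n → F), C₂ ≤ C₁ ∧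
      Module.finrank F C₁ = k1 ∧ Module.finrank F C₂ = k2 ∧
      RGHW F t C₁ C₂ = n + t - k1 := by
  subst ht
  set m : Fin n := ⟨k1 - 1, by omega⟩ with hmdef
  have hmval : (m : ℕ) = k1 - 1 := rfl
  -- the codes
  set C₁ : Submodule F (Fin n → F) :=
    { carrier := {x | ∀ j : Fin n, k1 - 1 ≤ (j : ℕ) → x j = x m}
      add_mem' := fun ha hb j hj => by simp [ha j hj, hb j hj]
      zero_mem' := fun j hj => rfl
      smul_mem' := fun c x hx j hj => by simp [hx j hj] } with hC1def
  set I2 : Finset (Fin n) :=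
    Finset.univ.filter (fun i : Fin n => 0 ≤ (i : ℕ) ∧ (i : ℕ) < k2) with hI2def
  set C₂ : Submodule F (Fin n → F) := VI F n I2 with hC2def
  have memC1 : ∀ x : Fin n → F, x ∈ C₁ ↔ ∀ j : Fin n, k1 - 1 ≤ (j : ℕ) → x j = x m :=
    fun _ => Iff.rfl
  have memI2 : ∀ i : Fin n, i ∈ I2 ↔ (i : ℕ) < k2 := by
    intro i; simp [hI2def]
  have memC2 : ∀ x : Fin n → F, x ∈ C₂ ↔ ∀ i : Fin n, k2 ≤ (i : ℕ) → x i = 0 := by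
    intro x
    rw [hC2def, mem_VI]
    constructor
    · intro h i hi; exact h i (by rw [memI2]; omega)
    · intro h i hi; exact h i (by rw [memI2] at hi; omega)
  refine ⟨C₁, C₂, ?_, ?_, ?_, ?_⟩
  · -- C₂ ≤ C₁
    intro x hx
    rw [memC2] at hx
    intro j hj
    rw [hx j (by omega), hx m (by omega)]
  · -- finrank C₁ = k1
    set S1 : Finset (Fin n) :=
      Finset.univ.filter (fun i : Fin n => 0 ≤ (i : ℕ) ∧ (i : ℕ) < k1) with hS1def
    have memS1 : ∀ i : Fin n, i ∈ S1 ↔ (i : ℕ) < k1 := by intro i; simp [hS1def]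
    have hmS1 : m ∈ S1 := by rw [memS1]; omega
    have cardS1 : S1.card = k1 := by
      have := card_filter_fin n 0 k1 hk1n; rw [← hS1def] at this; omega
    apply le_antisymm
    · have := inj_le' C₁ S1 ?_
      · omega
      · intro x hx h0
        have hxm : x m = 0 := h0 m hmS1
        funext j
        by_cases hj : k1 - 1 ≤ (j : ℕ)
        · rw [hx j hj, hxm]; rfl
        · exact h0 j (by rw [memS1]; omega)
    · rw [← cardS1]
      refine sec_le' C₁ S1
        (fun y j => if h : j ∈ S1 then y ⟨j, h⟩ else y ⟨m, hmS1⟩) ?_ ?_ ?_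
      · constructor
        · intro y z; funext j
          simp only [Pi.add_apply]; split_ifs <;> simp
        · intro c y; funext j
          simp only [Pi.smul_apply]; split_ifs <;> simp
      · intro y j hj
        beta_reduce
        rw [dif_pos hmS1]
        by_cases h : j ∈ S1
        · rw [dif_pos h]
          have hv : (j : ℕ) = (m : ℕ) := by
            have := (memS1 j).mp h; rw [hmval]; omega
          exact congrArg y (Subtype.ext (Fin.val_injective hv))
        · rw [dif_neg h]
      · intro y i; exact dif_pos i.2
  · -- finrank C₂ = k2
    have cardI2 : I2.card = k2 := by
      have := card_filter_fin n 0 k2 (by omega); rw [← hI2def] at this; omega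
    apply le_antisymm
    · have := inj_le' C₂ I2 ?_
      · omega
      · intro x hx h0
        funext i
        by_cases hi : i ∈ I2
        · exact h0 i hi
        · exact (memC2 x).mp hx i (by rw [memI2] at hi; omega)
    · rw [← cardI2]
      refine sec_le' C₂ I2 (fun y j => if h : j ∈ I2 then y ⟨j, h⟩ else 0) ?_ ?_ ?_
      · constructor
        · intro y z; funext j
          simp only [Pi.add_apply]; split_ifs <;> simp
        · intro c y; funext j
          simp only [Pi.smul_apply]; split_ifs <;> simp
      · intro y
        rw [memC2]
        intro i hi
        have h0 : i ∉ I2 := by rw [memI2]; omega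
        beta_reduce
        rw [dif_neg h0]
      · intro y i; exact dif_pos i.2
  · -- RGHW
    have key : RGHW F (k1 - k2) C₁ C₂ = n - k2 := by
      set I0 : Finset (Fin n) :=
        Finset.univ.filter (fun i : Fin n => k2 ≤ (i : ℕ) ∧ (i : ℕ) < n) with hI0def
      have memI0 : ∀ i : Fin n, i ∈ I0 ↔ k2 ≤ (i : ℕ) := by
        intro i
        simp only [hI0def, Finset.mem_filter, Finset.mem_univ, true_and]
        exact ⟨fun h => h.1, fun h => ⟨h, i.2⟩⟩
      have cardI0 : I0.card = n - k2 := by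
        have := card_filter_fin n k2 n le_rfl; rw [← hI0def] at this; omega
      -- C₂ ⊓ VI I0 = ⊥
      have hbot : C₂ ⊓ VI F n I0 = ⊥ := by
        apply le_antisymm _ bot_le
        intro x hx
        obtain ⟨hx2, hxI⟩ := hx
        rw [Submodule.mem_bot]
        funext i
        by_cases hi : k2 ≤ (i : ℕ)
        · exact (memC2 x).mp hx2 i hi
        · exact mem_VI.mp hxI i (by rw [memI0]; omega)
      -- lower bound for finrank (C₁ ⊓ VI I0)
      set S3 : Finset (Fin n) :=
        Finset.univ.filter (fun i : Fin n => k2 ≤ (i : ℕ) ∧ (i : ℕ) < k1) with hS3def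
      have memS3 : ∀ i : Fin n, i ∈ S3 ↔ k2 ≤ (i : ℕ) ∧ (i : ℕ) < k1 := by
        intro i; simp [hS3def]
      have hmS3 : m ∈ S3 := by rw [memS3]; omega
      have cardS3 : S3.card = k1 - k2 := by
        have := card_filter_fin n k2 k1 hk1n; rw [← hS3def] at this; omega
      have hlow : k1 - k2 ≤ Module.finrank F ↥(C₁ ⊓ VI F n I0) := by
        rw [← cardS3]
        refine sec_le' _ S3
          (fun y j => if h : j ∈ S3 then y ⟨j, h⟩
            else if k1 - 1 ≤ (j : ℕ) then y ⟨m, hmS3⟩ else 0) ?_ ?_ ?_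
        · constructor
          · intro y z; funext j
            simp only [Pi.add_apply]; split_ifs <;> simp
          · intro c y; funext j
            simp only [Pi.smul_apply]; split_ifs <;> simp
        · intro y
          refine Submodule.mem_inf.mpr ⟨?_, ?_⟩
          · intro j hj
            beta_reduce
            rw [dif_pos hmS3]
            by_cases h : j ∈ S3
            · rw [dif_pos h]
              have hv : (j : ℕ) = (m : ℕ) := by
                have := (memS3 j).mp h; rw [hmval]; omega
              exact congrArg y (Subtype.ext (Fin.val_injective hv))
            · rw [dif_neg h, if_pos hj]
          · rw [mem_VI]
            intro i hi
            rw [memI0] at hi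
            have h1 : i ∉ S3 := by rw [memS3]; omega
            have h2 : ¬ (k1 - 1 ≤ (i : ℕ)) := by omega
            beta_reduce
            rw [dif_neg h1, if_neg h2]
        · intro y i; exact dif_pos i.2
      have hmem0 : (n - k2) ∈ {d : ℕ | ∃ I : Finset (Fin n), I.card = d ∧
          Module.finrank F ↥(C₁ ⊓ VI F n I) ≥ Module.finrank F ↥(C₂ ⊓ VI F n I) + (k1 - k2)} := by
        refine ⟨I0, cardI0, ?_⟩
        rw [hbot, finrank_bot]
        simpa using hlow
      -- every element of the set is ≥ n - k2
      have hlb : ∀ d ∈ {d : ℕ | ∃ I : Finset (Fin n), I.card = d ∧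
          Module.finrank F ↥(C₁ ⊓ VI F n I) ≥ Module.finrank F ↥(C₂ ⊓ VI F n I) + (k1 - k2)},
          n - k2 ≤ d := by
        rintro d ⟨I, hcard, hineq⟩
        subst hcard
        -- a = number of small indices of I
        have step1 : (I ∩ I2).card ≤ Module.finrank F ↥(C₂ ⊓ VI F n I) := by
          refine sec_le' _ (I ∩ I2)
            (fun y j => if h : j ∈ I ∩ I2 then y ⟨j, h⟩ else 0) ?_ ?_ ?_
          · constructor
            · intro y z; funext j
              simp only [Pi.add_apply]; split_ifs <;> simp
            · intro c y; funext j
              simp only [Pi.smul_apply]; split_ifs <;> simp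
          · intro y
            refine Submodule.mem_inf.mpr ⟨?_, ?_⟩
            · rw [memC2]
              intro i hi
              have h0 : i ∉ I ∩ I2 := by
                rw [Finset.mem_inter, memI2]; omega
              beta_reduce
              rw [dif_neg h0]
            · rw [mem_VI]
              intro i hi
              have h0 : i ∉ I ∩ I2 := by rw [Finset.mem_inter]; tauto
              beta_reduce
              rw [dif_neg h0]
          · intro y i; exact dif_pos i.2
        set Iio : Finset (Fin n) :=
          Finset.univ.filter (fun i : Fin n => 0 ≤ (i : ℕ) ∧ (i : ℕ) < k1 - 1) with hIiodef
        have memIio : ∀ i : Fin n, i ∈ Iio ↔ (i : ℕ) < k1 - 1 := by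
          intro i; simp [hIiodef]
        by_cases hcase : ∀ j : Fin n, k1 - 1 ≤ (j : ℕ) → j ∈ I
        · -- all top coordinates are in I
          have step2 : Module.finrank F ↥(C₁ ⊓ VI F n I) ≤ ((I ∩ Iio) ∪ {m}).card := by
            refine inj_le' _ _ ?_
            intro x hx h0
            obtain ⟨hx1, hxI⟩ := Submodule.mem_inf.mp hx
            have hxm : x m = 0 := h0 m (by simp)
            funext j
            by_cases hj : k1 - 1 ≤ (j : ℕ)
            · rw [hx1 j hj, hxm]; rfl
            · by_cases hjI : j ∈ I
              · exact h0 j (by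
                  rw [Finset.mem_union, Finset.mem_inter, memIio]
                  left; exact ⟨hjI, by omega⟩)
              · exact mem_VI.mp hxI j hjI
          have cardu : ((I ∩ Iio) ∪ {m}).card ≤ (I ∩ Iio).card + 1 :=
            le_trans (Finset.card_union_le _ _) (by simp)
          set Itop : Finset (Fin n) :=
            Finset.univ.filter (fun i : Fin n => k1 - 1 ≤ (i : ℕ) ∧ (i : ℕ) < n) with hItopdef
          have cardItop : Itop.card = n - (k1 - 1) := by
            have := card_filter_fin n (k1 - 1) n le_rfl; rw [← hItopdef] at this; omega
          have hsub : (I ∩ Iio) ∪ Itop ⊆ I := by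
            intro j hj
            rcases Finset.mem_union.mp hj with h | h
            · exact (Finset.mem_inter.mp h).1
            · rw [hItopdef, Finset.mem_filter] at h
              exact hcase j h.2.1
          have hdisj : Disjoint (I ∩ Iio) Itop := by
            rw [Finset.disjoint_left]
            intro j hj hj2
            rw [Finset.mem_inter, memIio] at hj
            rw [hItopdef, Finset.mem_filter] at hj2
            omega
          have step3 : (I ∩ Iio).card + (n - (k1 - 1)) ≤ I.card := by
            have := Finset.card_le_card hsub
            rw [Finset.card_union_of_disjoint hdisj, cardItop] at this
            exact this
          omega
        · -- some top coordinate j0 ∉ I : contradiction with the rank condition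
          push_neg at hcase
          obtain ⟨j0, hj0, hj0I⟩ := hcase
          have step2 : Module.finrank F ↥(C₁ ⊓ VI F n I) ≤ (I ∩ Iio).card := by
            refine inj_le' _ _ ?_
            intro x hx h0
            obtain ⟨hx1, hxI⟩ := Submodule.mem_inf.mp hx
            have hxm : x m = 0 := by
              have h1 := hx1 j0 hj0
              have h2 := mem_VI.mp hxI j0 hj0I
              rw [← h1, h2]
            funext j
            by_cases hj : k1 - 1 ≤ (j : ℕ)
            · rw [hx1 j hj, hxm]; rfl
            · by_cases hjI : j ∈ I
              · exact h0 j (by rw [Finset.mem_inter, memIio]; exact ⟨hjI, by omega⟩)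
              · exact mem_VI.mp hxI j hjI
          set Smid : Finset (Fin n) :=
            Finset.univ.filter (fun i : Fin n => k2 ≤ (i : ℕ) ∧ (i : ℕ) < k1 - 1) with hSmiddef
          have cardSmid : Smid.card = k1 - 1 - k2 := by
            have := card_filter_fin n k2 (k1 - 1) (by omega); rw [← hSmiddef] at this; omega
          have hsub : I ∩ Iio ⊆ (I ∩ I2) ∪ Smid := by
            intro j hj
            rw [Finset.mem_inter, memIio] at hj
            rw [Finset.mem_union, Finset.mem_inter, memI2, hSmiddef, Finset.mem_filter]
            by_cases h : (j : ℕ) < k2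
            · left; exact ⟨hj.1, h⟩
            · right; exact ⟨Finset.mem_univ j, by omega, hj.2⟩
          have bound : (I ∩ Iio).card ≤ (I ∩ I2).card + (k1 - 1 - k2) := by
            have := Finset.card_le_card hsub
            have h2 := Finset.card_union_le (I ∩ I2) Smid
            omega
          omega
      rw [RGHW]
      exact le_antisymm (Nat.sInf_le hmem0) (le_csInf ⟨_, hmem0⟩ hlb)
    rw [key]
    omega
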